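/- For any w ∈ C ∩ B̄_β, the Mordukhovich (limiting) normal cone satisfies N(w, C ∩ B̄_β) = { y ∈ ℝ^d : there exists X ∈ Y such that for all i ∈ X and all j ∈ {1,…,d_i}, y^i_j ≥ 0 if w^i_j = β, y^i_j = 0 if |w^i_j| < β, and y^i_j ≤ 0 if w^i_j = −β }. -/

import Mathlib

open MeasureTheory Filter
open scoped Classical BigOperators

noncomputable section

/-- The closed `l∞`-ball of radius `r` centered at `0` in `ℝ^d`. -/
def Binf (d : ℕ) (r : ℝ) : Set (EuclideanSpace ℝ (Fin d)) := {z | ∀ i, |z i| ≤ r}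

/-- The weighted group `l0`-norm constraint set
`C := {w : Σ_i p_i · 1_{w^i ≠ 0}(w) ≤ m}`, where the partition of coordinates into `n` blocks
is encoded by `blk : Fin d → Fin n` (coordinate `j` belongs to block `blk j`). -/
def groupC (d n : ℕ) (blk : Fin d → Fin n) (p : Fin n → ℝ) (m : ℝ) :
    Set (EuclideanSpace ℝ (Fin d)) :=
  {w | (∑ i : Fin n, if ∃ j, blk j = i ∧ w j ≠ 0 then p i else 0) ≤ m}

/-- The Fréchet normal cone of `S` at `w`:
`N̂(w,S) = {y : limsup_{x → w, x ∈ S, x ≠ w} ⟨y, x−w⟩/‖x−w‖₂ ≤ 0}`, expressed in ε-δ form. -/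
def frechetNormalCone {d : ℕ} (S : Set (EuclideanSpace ℝ (Fin d)))
    (w : EuclideanSpace ℝ (Fin d)) : Set (EuclideanSpace ℝ (Fin d)) :=
  {y | ∀ ε > (0 : ℝ), ∃ δ > (0 : ℝ), ∀ x ∈ S, x ≠ w → ‖x - w‖ < δ →
    (inner ℝ y (x - w) : ℝ) ≤ ε * ‖x - w‖}

/-- The set of block indices whose block of `w` is nonzero: `I(w) := {i : w^i ≠ 0}`. -/
def blkSupport {d n : ℕ} (blk : Fin d → Fin n) (w : EuclideanSpace ℝ (Fin d)) :
    Set (Fin n) := {i | ∃ j, blk j = i ∧ w j ≠ 0}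

/-- The aggregate penalty `Σ_{i ∈ I(w)} p_i` of the nonzero blocks of `w`. -/
def suppPenalty {d n : ℕ} (blk : Fin d → Fin n) (p : Fin n → ℝ)
    (w : EuclideanSpace ℝ (Fin d)) : ℝ :=
  ∑ i : Fin n, if i ∈ blkSupport blk w then p i else 0

/-- `J(w) := {j ∉ I(w) : Σ_{i ∈ I(w)} p_i + p_j ≤ m}`, the blocks of `w` that are zero but are
not constrained to be. -/
def blkFree {d n : ℕ} (blk : Fin d → Fin n) (p : Fin n → ℝ) (m : ℝ)
    (w : EuclideanSpace ℝ (Fin d)) : Set (Fin n) :=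
  {i | i ∉ blkSupport blk w ∧ suppPenalty blk p w + p i ≤ m}

/-- The Mordukhovich (limiting) normal cone of `S` at `w`: the set of limits `y` of sequences
`y_k ∈ N̂(x_k, S)` with `x_k ∈ S`, `x_k → w`. -/
def mordNormalCone {d : ℕ} (S : Set (EuclideanSpace ℝ (Fin d)))
    (w : EuclideanSpace ℝ (Fin d)) : Set (EuclideanSpace ℝ (Fin d)) :=
  {y | ∃ (x : ℕ → EuclideanSpace ℝ (Fin d)) (yk : ℕ → EuclideanSpace ℝ (Fin d)),
    (∀ k, x k ∈ S) ∧ Filter.Tendsto x Filter.atTop (nhds w) ∧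
    Filter.Tendsto yk Filter.atTop (nhds y) ∧ ∀ k, yk k ∈ frechetNormalCone S (x k)}

lemma coord_abs_le_norm {d : ℕ} (x : EuclideanSpace ℝ (Fin d)) (j : Fin d) : |x j| ≤ ‖x‖ := by
  rw [EuclideanSpace.norm_eq]
  have h1 : |x j| = Real.sqrt (|x j|^2) := by rw [Real.sqrt_sq_eq_abs, abs_abs]
  rw [h1]
  apply Real.sqrt_le_sqrt
  exact Finset.single_le_sum (f := fun i => ‖x i‖^2) (fun i _ => by positivity) (Finset.mem_univ j)

lemma tendsto_coord {d : ℕ} {u : ℕ → EuclideanSpace ℝ (Fin d)} {v : EuclideanSpace ℝ (Fin d)}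
    (h : Tendsto u atTop (nhds v)) (j : Fin d) :
    Tendsto (fun k => u k j) atTop (nhds (v j)) := by
  rw [Metric.tendsto_atTop] at h ⊢
  intro ε hε
  obtain ⟨N, hN⟩ := h ε hε
  refine ⟨N, fun k hk => ?_⟩
  have h1 : dist (u k j) (v j) ≤ dist (u k) v := by
    rw [Real.dist_eq, dist_eq_norm]
    exact coord_abs_le_norm (u k - v) j
  exact lt_of_le_of_lt h1 (hN k hk)

section main
variable {d n : ℕ} {blk : Fin d → Fin n} {p : Fin n → ℝ} {m β : ℝ}

lemma sum_supp_le (hp : ∀ i, 0 < p i) (z : EuclideanSpace ℝ (Fin d)) (X : Finset (Fin n))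
    (h : ∀ i, (∃ j, blk j = i ∧ z j ≠ 0) → i ∈ X) :
    (∑ i : Fin n, if ∃ j, blk j = i ∧ z j ≠ 0 then p i else 0) ≤ ∑ i ∈ X, p i := by
  rw [← Finset.sum_filter]
  apply Finset.sum_le_sum_of_subset_of_nonneg
  · intro i hi
    simp only [Finset.mem_filter, Finset.mem_univ, true_and] at hi
    exact h i hi
  · intro i _ _; exact (hp i).le

lemma sum_le_sum_supp (hp : ∀ i, 0 < p i) (z : EuclideanSpace ℝ (Fin d)) (X : Finset (Fin n))
    (h : ∀ i ∈ X, ∃ j, blk j = i ∧ z j ≠ 0) :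
    ∑ i ∈ X, p i ≤ ∑ i : Fin n, if ∃ j, blk j = i ∧ z j ≠ 0 then p i else 0 := by
  rw [← Finset.sum_filter]
  apply Finset.sum_le_sum_of_subset_of_nonneg
  · intro i hi
    simp only [Finset.mem_filter, Finset.mem_univ, true_and]
    exact h i hi
  · intro i _ _; exact (hp i).le

lemma exists_maximal (hp : ∀ i, 0 < p i) (x : EuclideanSpace ℝ (Fin d))
    (hx : x ∈ groupC d n blk p m) :
    ∃ X : Finset (Fin n), (∀ i, (∃ j, blk j = i ∧ x j ≠ 0) → i ∈ X) ∧ (∑ i ∈ X, p i) ≤ m ∧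
      ∀ j ∉ X, m < (∑ i ∈ X, p i) + p j := by
  set F : Finset (Finset (Fin n)) :=
    Finset.univ.filter
      (fun X => (∀ i, (∃ j, blk j = i ∧ x j ≠ 0) → i ∈ X) ∧ (∑ i ∈ X, p i) ≤ m) with hF
  have hFne : F.Nonempty := by
    refine ⟨Finset.univ.filter (fun i => ∃ j, blk j = i ∧ x j ≠ 0), ?_⟩
    rw [hF, Finset.mem_filter]
    refine ⟨Finset.mem_univ _, fun i hi => Finset.mem_filter.mpr ⟨Finset.mem_univ i, hi⟩, ?_⟩
    rw [Finset.sum_filter]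
    exact hx
  obtain ⟨X, hXF, hXmax⟩ := F.exists_max_image (fun X => ∑ i ∈ X, p i) hFne
  rw [hF, Finset.mem_filter] at hXF
  refine ⟨X, hXF.2.1, hXF.2.2, ?_⟩
  intro j hj
  by_contra hcon
  push_neg at hcon
  have hins : insert j X ∈ F := by
    rw [hF, Finset.mem_filter]
    refine ⟨Finset.mem_univ _, fun i hi => Finset.mem_insert_of_mem (hXF.2.1 i hi), ?_⟩
    rw [Finset.sum_insert hj]
    linarith
  have h2 := hXmax _ hins
  rw [Finset.sum_insert hj] at h2
  linarith [hp j]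

lemma frechet_sign (hp : ∀ i, 0 < p i) (hβ : 0 < β)
    (x : EuclideanSpace ℝ (Fin d)) (hx : x ∈ groupC d n blk p m ∩ Binf d β)
    (y : EuclideanSpace ℝ (Fin d))
    (hy : y ∈ frechetNormalCone (groupC d n blk p m ∩ Binf d β) x)
    (X : Finset (Fin n)) (hXsupp : ∀ i, (∃ j, blk j = i ∧ x j ≠ 0) → i ∈ X)
    (hXsum : ∑ i ∈ X, p i ≤ m) (j : Fin d) (hj : blk j ∈ X) :
    (x j = β → 0 ≤ y j) ∧ (|x j| < β → y j = 0) ∧ (x j = -β → y j ≤ 0) := by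
  have key : ∀ ε > (0:ℝ), ∃ δ > (0:ℝ), ∀ t : ℝ, t ≠ 0 → |t| < δ → |x j + t| ≤ β →
      y j * t ≤ ε * |t| := by
    intro ε hε
    obtain ⟨δ, hδ, hfr⟩ := hy ε hε
    refine ⟨δ, hδ, fun t ht htδ htβ => ?_⟩
    set z := x + EuclideanSpace.single j t with hzdef
    have hz_app : ∀ j', z j' = x j' + if j' = j then t else 0 := by
      intro j'
      simp [hzdef, EuclideanSpace.single_apply]
    have hzx : z - x = EuclideanSpace.single j t := by
      rw [hzdef]; abel
    have hnorm : ‖z - x‖ = |t| := by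
      rw [hzx, EuclideanSpace.norm_single, Real.norm_eq_abs]
    have hzS : z ∈ groupC d n blk p m ∩ Binf d β := by
      constructor
      · refine le_trans (sum_supp_le hp z X ?_) hXsum
        rintro i ⟨j', hj', hzj'⟩
        by_cases hjj : j' = j
        · subst hjj; rw [← hj']; exact hj
        · rw [hz_app j', if_neg hjj, add_zero] at hzj'
          exact hXsupp i ⟨j', hj', hzj'⟩
      · intro j'
        rw [hz_app j']
        by_cases hjj : j' = j
        · rw [if_pos hjj, hjj]; exact htβ
        · rw [if_neg hjj, add_zero]; exact hx.2 j'
    have hzne : z ≠ x := by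
      intro h
      apply ht
      have := congrArg (fun v : EuclideanSpace ℝ (Fin d) => v j) h
      simp only at this
      rw [hz_app j, if_pos rfl] at this
      linarith
    have hlt : ‖z - x‖ < δ := by rw [hnorm]; exact htδ
    have hres := hfr z hzS hzne hlt
    have hinner : (inner ℝ y (z - x) : ℝ) = y j * t := by
      rw [hzx]
      have := EuclideanSpace.inner_single_right (𝕜 := ℝ) j t y
      simp only [RCLike.conj_to_real, starRingEnd_apply, star_trivial] at this
      rw [this]; ring
    rw [hinner, hnorm] at hres
    exact hres
  have hxβ : |x j| ≤ β := hx.2 j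
  refine ⟨?_, ?_, ?_⟩
  · intro hxj
    by_contra hc
    push_neg at hc
    obtain ⟨δ, hδ, hkey⟩ := key (-y j / 2) (by linarith)
    have hs0 : 0 < min (δ/2) β := lt_min (by linarith) hβ
    have hsδ : min (δ/2) β < δ := lt_of_le_of_lt (min_le_left _ _) (by linarith)
    have hsβ : min (δ/2) β ≤ β := min_le_right _ _
    have h1 := hkey (-(min (δ/2) β)) (neg_ne_zero.mpr hs0.ne')
      (by rw [abs_neg, abs_of_pos hs0]; exact hsδ)
      (by rw [hxj, abs_le]; constructor <;> linarith)
    rw [abs_neg, abs_of_pos hs0] at h1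
    nlinarith
  · intro hxj
    have habs : ∀ ε > (0:ℝ), |y j| ≤ ε := by
      intro ε hε
      obtain ⟨δ, hδ, hkey⟩ := key ε hε
      set s := min (δ/2) (β - |x j|) with hs
      have hs0 : 0 < s := lt_min (by linarith) (by linarith)
      have hsδ : s < δ := lt_of_le_of_lt (min_le_left _ _) (by linarith)
      have hsβ : s ≤ β - |x j| := min_le_right _ _
      set t := if 0 ≤ y j then s else -s with ht
      have ht0 : t ≠ 0 := by
        rw [ht]; split
        · exact hs0.ne'
        · exact neg_ne_zero.mpr hs0.ne'
      have htabs : |t| = s := by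
        rw [ht]; split
        · exact abs_of_pos hs0
        · rw [abs_neg]; exact abs_of_pos hs0
      have h1 := hkey t ht0 (by rw [htabs]; exact hsδ)
        (by
          have h2 : |x j + t| ≤ |x j| + |t| := abs_add_le _ _
          rw [htabs] at h2
          linarith)
      have h2 : y j * t = |y j| * s := by
        rw [ht]; split
        · rename_i h; rw [abs_of_nonneg h]
        · rename_i h; push_neg at h; rw [abs_of_neg h]; ring
      rw [h2, htabs] at h1
      exact le_of_mul_le_mul_right h1 hs0
    have h0 : |y j| ≤ 0 := by
      by_contra hc
      push_neg at hc
      have := habs (|y j|/2) (by linarith)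
      linarith
    exact abs_nonpos_iff.mp h0
  · intro hxj
    by_contra hc
    push_neg at hc
    obtain ⟨δ, hδ, hkey⟩ := key (y j / 2) (by linarith)
    have hs0 : 0 < min (δ/2) β := lt_min (by linarith) hβ
    have hsδ : min (δ/2) β < δ := lt_of_le_of_lt (min_le_left _ _) (by linarith)
    have hsβ : min (δ/2) β ≤ β := min_le_right _ _
    have h1 := hkey (min (δ/2) β) hs0.ne'
      (by rw [abs_of_pos hs0]; exact hsδ)
      (by rw [hxj, abs_le]; constructor <;> linarith)
    rw [abs_of_pos hs0] at h1
    nlinarith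

lemma mem_frechet (hp : ∀ i, 0 < p i) (hβ : 0 < β)
    (x : EuclideanSpace ℝ (Fin d)) (hx : x ∈ groupC d n blk p m ∩ Binf d β)
    (X : Finset (Fin n))
    (hXsupp : ∀ i, (∃ j, blk j = i ∧ x j ≠ 0) → i ∈ X)
    (hXfull : ∀ i ∈ X, ∃ j, blk j = i ∧ x j ≠ 0)
    (hXsum : ∑ i ∈ X, p i ≤ m) (hXmax : ∀ j ∉ X, m < (∑ i ∈ X, p i) + p j)
    (y : EuclideanSpace ℝ (Fin d))
    (hsign : ∀ j : Fin d, blk j ∈ X →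
      (x j = β → 0 ≤ y j) ∧ (|x j| < β → y j = 0) ∧ (x j = -β → y j ≤ 0)) :
    y ∈ frechetNormalCone (groupC d n blk p m ∩ Binf d β) x := by
  intro ε hε
  have hsne : (insert (1:ℝ)
      ((Finset.univ.filter fun j => x j ≠ 0).image fun j => |x j|)).Nonempty :=
    ⟨1, Finset.mem_insert_self _ _⟩
  have hex : ∃ δ : ℝ, 0 < δ ∧ ∀ j, x j ≠ 0 → δ ≤ |x j| := by
    refine ⟨Finset.min' _ hsne, ?_, ?_⟩
    · rcases Finset.mem_insert.mp (Finset.min'_mem _ hsne) with h | h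
      · rw [h]; norm_num
      · obtain ⟨j, hj, hj2⟩ := Finset.mem_image.mp h
        rw [← hj2]
        exact abs_pos.mpr (Finset.mem_filter.mp hj).2
    · intro j hj
      exact Finset.min'_le _ _ (Finset.mem_insert_of_mem
        (Finset.mem_image.mpr ⟨j, Finset.mem_filter.mpr ⟨Finset.mem_univ j, hj⟩, rfl⟩))
  obtain ⟨δ, hδpos, hδle⟩ := hex
  refine ⟨δ, hδpos, fun z hz hzne hznorm => ?_⟩
  have hnz : ∀ j, x j ≠ 0 → z j ≠ 0 := by
    intro j hj hzj
    have h1 : |z j - x j| ≤ ‖z - x‖ := coord_abs_le_norm (z - x) j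
    rw [hzj, zero_sub, abs_neg] at h1
    exact absurd (lt_of_le_of_lt h1 hznorm) (not_lt.mpr (hδle j hj))
  have hzsupp : ∀ i, (∃ j, blk j = i ∧ z j ≠ 0) → i ∈ X := by
    rintro i ⟨j, hji, hzj⟩
    by_contra hiX
    have h1 : ∑ i' ∈ insert i X, p i' ≤
        ∑ i' : Fin n, if ∃ j', blk j' = i' ∧ z j' ≠ 0 then p i' else 0 := by
      apply sum_le_sum_supp hp
      intro i' hi'
      rcases Finset.mem_insert.mp hi' with h | h
      · subst h; exact ⟨j, hji, hzj⟩
      · obtain ⟨j', hj', hxj'⟩ := hXfull i' h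
        exact ⟨j', hj', hnz j' hxj'⟩
    have h2 : (∑ i' : Fin n, if ∃ j', blk j' = i' ∧ z j' ≠ 0 then p i' else 0) ≤ m := hz.1
    rw [Finset.sum_insert hiX] at h1
    have h3 := hXmax i hiX
    linarith
  have hzzero : ∀ j, blk j ∉ X → z j = 0 := by
    intro j hj
    by_contra hzj
    exact hj (hzsupp (blk j) ⟨j, rfl, hzj⟩)
  have hxzero : ∀ j, blk j ∉ X → x j = 0 := by
    intro j hj
    by_contra hxj
    exact hj (hXsupp (blk j) ⟨j, rfl, hxj⟩)
  have hinner : (inner ℝ y (z - x) : ℝ) = ∑ j, y j * ((z - x) j) := by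
    rw [PiLp.inner_apply]
    apply Finset.sum_congr rfl
    intro j _
    simp [RCLike.inner_apply, mul_comm]
  have hterm : ∀ j : Fin d, y j * ((z - x) j) ≤ 0 := by
    intro j
    have hzx : (z - x) j = z j - x j := rfl
    by_cases hj : blk j ∈ X
    · obtain ⟨h1, h2, h3⟩ := hsign j hj
      have hxb : |x j| ≤ β := hx.2 j
      have hzb : |z j| ≤ β := hz.2 j
      by_cases hb : x j = β
      · have hy0 := h1 hb
        have : z j - x j ≤ 0 := by
          have := (abs_le.mp hzb).2
          rw [hb]; linarith
        rw [hzx]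
        exact mul_nonpos_of_nonneg_of_nonpos hy0 this
      · by_cases hb' : x j = -β
        · have hy0 := h3 hb'
          have : 0 ≤ z j - x j := by
            have := (abs_le.mp hzb).1
            rw [hb']; linarith
          rw [hzx]
          exact mul_nonpos_of_nonpos_of_nonneg hy0 this
        · have habs : |x j| < β := by
            rcases (abs_le.mp hxb) with ⟨hl, hr⟩
            rw [abs_lt]
            exact ⟨lt_of_le_of_ne hl (Ne.symm hb'), lt_of_le_of_ne hr hb⟩
          rw [hzx, h2 habs, zero_mul]
    · rw [hzx, hzzero j hj, hxzero j hj, sub_zero, mul_zero]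
  calc (inner ℝ y (z - x) : ℝ) = ∑ j, y j * ((z - x) j) := hinner
    _ ≤ 0 := Finset.sum_nonpos fun j _ => hterm j
    _ ≤ ε * ‖z - x‖ := mul_nonneg hε.le (norm_nonneg _)

end main

/-- For any `w ∈ C ∩ B̄_β`, the Mordukhovich normal cone satisfies
`N(w, C ∩ B̄_β) = {y : ∃ X ∈ Y, ∀ i ∈ X, ∀ j ∈ block i, y^i_j ≥ 0 if w^i_j = β,
y^i_j = 0 if |w^i_j| < β, and y^i_j ≤ 0 if w^i_j = −β}`, where `Y` is the collection of index
sets `X ⊇ I(w)` with `Σ_{i∈X} p_i ≤ m` and `Σ_{i∈X} p_i + p_j > m` for all `j ∉ X`. -/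
theorem mordukhovich_normal_cone_C_inter_ball
    (d n : ℕ) (blk : Fin d → Fin n) (hblk : Function.Surjective blk)
    (p : Fin n → ℝ) (hp : ∀ i, 0 < p i) (m : ℝ) (hm : 0 < m)
    (β : ℝ) (hβ : 0 < β)
    (w : EuclideanSpace ℝ (Fin d)) (hw : w ∈ groupC d n blk p m ∩ Binf d β) :
    mordNormalCone (groupC d n blk p m ∩ Binf d β) w
      = {y : EuclideanSpace ℝ (Fin d) |
          ∃ X : Finset (Fin n),
            (∀ i ∈ blkSupport blk w, i ∈ X) ∧
            (∑ i ∈ X, p i) ≤ m ∧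
            (∀ j ∉ X, m < (∑ i ∈ X, p i) + p j) ∧
            ∀ i ∈ X, ∀ j : Fin d, blk j = i →
              (w j = β → 0 ≤ y j) ∧ (|w j| < β → y j = 0) ∧ (w j = -β → y j ≤ 0)} := by
  ext y
  simp only [Set.mem_setOf_eq]
  constructor
  · rintro ⟨x, yk, hxS, hxw, hykw, hfr⟩
    choose X hX1 hX2 hX3 using fun k => exists_maximal hp (x k) (hxS k).1
    have hNall : ∀ᶠ k in atTop, ∀ j, w j ≠ 0 → x k j ≠ 0 := by
      rw [eventually_all]
      intro j
      by_cases hj : w j = 0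
      · filter_upwards with k h; exact absurd hj h
      · have hj' : (0:ℝ) < |w j| := abs_pos.mpr hj
        have h1 : ∀ᶠ k in atTop, dist (x k j) (w j) < |w j| :=
          (tendsto_coord hxw j).eventually (Metric.ball_mem_nhds _ hj')
        filter_upwards [h1] with k hk _
        intro hzero
        rw [hzero, Real.dist_eq, zero_sub, abs_neg] at hk
        exact absurd hk (lt_irrefl _)
    obtain ⟨N, hNspec⟩ := eventually_atTop.mp hNall
    obtain ⟨Xf, hXfinf⟩ := Finite.exists_infinite_fiber (fun t : ℕ => X (t + N))
    have hT : {t : ℕ | X (t + N) = Xf}.Infinite := by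
      have := Set.infinite_coe_iff.mp hXfinf
      convert this using 1
      rfl
    have hpick : ∀ M : ℕ, ∃ k, M ≤ k ∧ N ≤ k ∧ X k = Xf := by
      intro M
      obtain ⟨t, ht, htM⟩ := hT.exists_gt M
      exact ⟨t + N, le_trans htM.le (Nat.le_add_right _ _), Nat.le_add_left _ _, ht⟩
    refine ⟨Xf, ?_, ?_, ?_, ?_⟩
    · rintro i ⟨j, hji, hwj⟩
      obtain ⟨k, _, hkN, hkX⟩ := hpick 0
      rw [← hkX]
      exact hX1 k i ⟨j, hji, hNspec k hkN j hwj⟩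
    · obtain ⟨k, _, _, hkX⟩ := hpick 0
      rw [← hkX]; exact hX2 k
    · intro j hj
      obtain ⟨k, _, _, hkX⟩ := hpick 0
      rw [← hkX] at hj ⊢
      exact hX3 k j hj
    · intro i hiXf j hji
      have hyj : Tendsto (fun k => yk k j) atTop (nhds (y j)) := tendsto_coord hykw j
      have hxj : Tendsto (fun k => x k j) atTop (nhds (w j)) := tendsto_coord hxw j
      have hsign : ∀ k, X k = Xf →
          (x k j = β → 0 ≤ yk k j) ∧ (|x k j| < β → yk k j = 0) ∧
          (x k j = -β → yk k j ≤ 0) := by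
        intro k hkX
        exact frechet_sign hp hβ (x k) (hxS k) (yk k) (hfr k) (X k) (hX1 k) (hX2 k) j
          (by rw [hkX, hji]; exact hiXf)
      refine ⟨?_, ?_, ?_⟩
      · intro hwj
        by_contra hc
        push_neg at hc
        have h1 : ∀ᶠ k in atTop, yk k j < 0 := hyj.eventually_lt_const hc
        have h2 : ∀ᶠ k in atTop, -β < x k j :=
          hxj.eventually_const_lt (by rw [hwj]; linarith)
        obtain ⟨M, hM⟩ := eventually_atTop.mp (h1.and h2)
        obtain ⟨k, hkM, hkN, hkX⟩ := hpick M
        have hs := hsign k hkX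
        have hxkβ : x k j ≤ β := (abs_le.mp ((hxS k).2 j)).2
        have hyk0 : 0 ≤ yk k j := by
          by_cases hb : x k j = β
          · exact hs.1 hb
          · have habs : |x k j| < β := abs_lt.mpr ⟨(hM k hkM).2, lt_of_le_of_ne hxkβ hb⟩
            rw [hs.2.1 habs]
        exact absurd hyk0 (not_le.mpr (hM k hkM).1)
      · intro hwj
        by_contra hc
        have h1 : ∀ᶠ k in atTop, yk k j ≠ 0 := by
          rcases lt_or_gt_of_ne hc with h | h
          · filter_upwards [hyj.eventually_lt_const h] with k hk
            exact ne_of_lt hk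
          · filter_upwards [hyj.eventually_const_lt h] with k hk
            exact ne_of_gt hk
        have h2 : ∀ᶠ k in atTop, |x k j| < β := (hxj.abs).eventually_lt_const hwj
        obtain ⟨M, hM⟩ := eventually_atTop.mp (h1.and h2)
        obtain ⟨k, hkM, hkN, hkX⟩ := hpick M
        exact (hM k hkM).1 ((hsign k hkX).2.1 (hM k hkM).2)
      · intro hwj
        by_contra hc
        push_neg at hc
        have h1 : ∀ᶠ k in atTop, 0 < yk k j := hyj.eventually_const_lt hc
        have h2 : ∀ᶠ k in atTop, x k j < β :=
          hxj.eventually_lt_const (by rw [hwj]; linarith)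
        obtain ⟨M, hM⟩ := eventually_atTop.mp (h1.and h2)
        obtain ⟨k, hkM, hkN, hkX⟩ := hpick M
        have hs := hsign k hkX
        have hxkβ : -β ≤ x k j := (abs_le.mp ((hxS k).2 j)).1
        have hyk0 : yk k j ≤ 0 := by
          by_cases hb : x k j = -β
          · exact hs.2.2 hb
          · have habs : |x k j| < β :=
              abs_lt.mpr ⟨lt_of_le_of_ne hxkβ (Ne.symm hb), (hM k hkM).2⟩
            rw [hs.2.1 habs]
        exact absurd hyk0 (not_le.mpr (hM k hkM).1)
  · rintro ⟨X, hXsupp, hXsum, hXmax, hXsign⟩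
    have hXsupp' : ∀ i, (∃ j, blk j = i ∧ w j ≠ 0) → i ∈ X := hXsupp
    set t : ℕ → ℝ := fun k => β / (k + 2) with htdef
    have ht0 : ∀ k, 0 < t k := by
      intro k
      apply div_pos hβ
      positivity
    have htβ : ∀ k, t k < β := by
      intro k
      rw [htdef]
      rw [div_lt_iff₀ (by positivity)]
      nlinarith [Nat.cast_nonneg (α := ℝ) k]
    set x : ℕ → EuclideanSpace ℝ (Fin d) :=
      fun k => WithLp.toLp 2 (fun j => if w j = 0 ∧ blk j ∈ X then t k else w j) with hxdef
    have hxapp : ∀ k j, x k j = if w j = 0 ∧ blk j ∈ X then t k else w j := fun k j => rfl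
    have hsupp : ∀ k i, (∃ j, blk j = i ∧ x k j ≠ 0) → i ∈ X := by
      rintro k i ⟨j, hji, hxj⟩
      rw [hxapp] at hxj
      by_cases h : w j = 0 ∧ blk j ∈ X
      · rw [← hji]; exact h.2
      · rw [if_neg h] at hxj
        exact hXsupp' i ⟨j, hji, hxj⟩
    have hfull : ∀ k, ∀ i ∈ X, ∃ j, blk j = i ∧ x k j ≠ 0 := by
      intro k i hi
      by_cases hiw : ∃ j, blk j = i ∧ w j ≠ 0
      · obtain ⟨j, hji, hwj⟩ := hiw
        refine ⟨j, hji, ?_⟩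
        rw [hxapp, if_neg (fun h => hwj h.1)]
        exact hwj
      · push_neg at hiw
        obtain ⟨j, hji⟩ := hblk i
        have hwj : w j = 0 := hiw j hji
        refine ⟨j, hji, ?_⟩
        rw [hxapp, if_pos ⟨hwj, hji ▸ hi⟩]
        exact (ht0 k).ne'
    have hxS : ∀ k, x k ∈ groupC d n blk p m ∩ Binf d β := by
      intro k
      constructor
      · exact le_trans (sum_supp_le hp (x k) X (hsupp k)) hXsum
      · intro j
        rw [hxapp]
        by_cases h : w j = 0 ∧ blk j ∈ X
        · rw [if_pos h, abs_of_pos (ht0 k)]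
          exact (htβ k).le
        · rw [if_neg h]
          exact hw.2 j
    have hxw : Tendsto x atTop (nhds w) := by
      have htt : Tendsto t atTop (nhds 0) := by
        rw [htdef]
        apply Tendsto.div_atTop (tendsto_const_nhds)
        apply Filter.tendsto_atTop_add_const_right
        exact tendsto_natCast_atTop_atTop
      rw [tendsto_iff_dist_tendsto_zero]
      apply squeeze_zero (fun k => dist_nonneg)
        (g := fun k => Real.sqrt d * t k)
      · intro k
        rw [EuclideanSpace.dist_eq]
        have hb : ∀ j : Fin d, dist (x k j) (w j) ^ 2 ≤ t k ^ 2 := by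
          intro j
          rw [Real.dist_eq, hxapp]
          by_cases h : w j = 0 ∧ blk j ∈ X
          · rw [if_pos h, h.1, sub_zero, abs_of_pos (ht0 k)]
          · rw [if_neg h, sub_self, abs_zero]
            have := ht0 k
            nlinarith
        have h1 : (∑ j : Fin d, dist (x k j) (w j) ^ 2) ≤ ∑ _j : Fin d, t k ^ 2 :=
          Finset.sum_le_sum fun j _ => hb j
        rw [Finset.sum_const, Finset.card_univ, Fintype.card_fin, nsmul_eq_mul] at h1
        calc Real.sqrt (∑ j : Fin d, dist (x k j) (w j) ^ 2)
            ≤ Real.sqrt ((d : ℝ) * t k ^ 2) := Real.sqrt_le_sqrt h1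
          _ = Real.sqrt d * t k := by
              rw [Real.sqrt_mul (Nat.cast_nonneg d), Real.sqrt_sq (ht0 k).le]
      · have := htt.const_mul (Real.sqrt d)
        simpa using this
    refine ⟨x, fun _ => y, hxS, hxw, tendsto_const_nhds, fun k => ?_⟩
    apply mem_frechet hp hβ (x k) (hxS k) X (hsupp k) (hfull k) hXsum hXmax y
    intro j hj
    have hcond := hXsign (blk j) hj j rfl
    rw [hxapp]
    by_cases h : w j = 0 ∧ blk j ∈ X
    · rw [if_pos h]
      have hy0 : y j = 0 := hcond.2.1 (by rw [h.1, abs_zero]; exact hβ)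
      refine ⟨fun hb => ?_, fun _ => hy0, fun hb => ?_⟩
      · exact absurd hb (ne_of_lt (htβ k))
      · exact absurd hb (by intro hh; have := ht0 k; rw [hh] at this; linarith)
    · rw [if_neg h]
      exact hcond
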